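/- Let p be a prime and G a t.d.l.c. group. Then G is locally elliptic if and only if for every compact subset K ⊆ G there exists a compactly supported continuous function f : G → ℚ_p with ‖f‖_∞ = 1 such that ‖g·f − f‖_∞ < 1 for all g ∈ K, where (g·f)(x) = f(g⁻¹x). Moreover, in that case f can even be chosen so that g·f = f for all g ∈ K. -/

import Mathlib

open Set Filter Topology
open scoped Pointwise

section VanDantzig

variable {G : Type*} [TopologicalSpace G] [Group G] [IsTopologicalGroup G]

/-- Variant of `TopologicalGroup.exist_mul_closure_nhd` for a compact clopen set in a
not-necessarily-compact group. -/
lemma myExist_mul_closure_nhd {W : Set G} (Wcomp : IsCompact W) (WClopen : IsClopen W) :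
    ∃ T ∈ 𝓝 (1 : G), W * T ⊆ W := by
  apply Wcomp.induction_on (p := fun S ↦ ∃ T ∈ 𝓝 (1 : G), S * T ⊆ W)
    ⟨Set.univ, by simp only [univ_mem, empty_mul, empty_subset, and_self]⟩
    (fun _ _ huv ⟨T, hT, mem⟩ ↦ ⟨T, hT, (mul_subset_mul_right huv).trans mem⟩)
    (fun U V ⟨T₁, hT₁, mem1⟩ ⟨T₂, hT₂, mem2⟩ ↦ ⟨T₁ ∩ T₂, inter_mem hT₁ hT₂, by
      rw [union_mul]
      exact union_subset (mul_subset_mul_left inter_subset_left |>.trans mem1)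
        (mul_subset_mul_left inter_subset_right |>.trans mem2)⟩)
  intro x memW
  have : (x, 1) ∈ (fun p : G × G ↦ p.1 * p.2) ⁻¹' W := by simp [memW]
  rcases isOpen_prod_iff.mp (continuous_mul.isOpen_preimage W <| WClopen.2) x 1 this with
    ⟨U, V, Uopen, Vopen, xmemU, onememV, prodsub⟩
  have h6 : U * V ⊆ W := mul_subset_iff.mpr (fun _ hx _ hy ↦ prodsub (mk_mem_prod hx hy))
  exact ⟨U ∩ W, ⟨U, Uopen.mem_nhds xmemU, W, fun _ a ↦ a, rfl⟩,
    V, IsOpen.mem_nhds Vopen onememV, fun _ a ↦ h6 ((mul_subset_mul_right inter_subset_left) a)⟩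

lemma myExists_mulInvClosureNhd {W : Set G} (Wcomp : IsCompact W) (WClopen : IsClopen W) :
    ∃ T, IsTopologicalGroup.mulInvClosureNhd T W := by
  rcases myExist_mul_closure_nhd Wcomp WClopen with ⟨S, Smemnhds, mulclose⟩
  rcases mem_nhds_iff.mp Smemnhds with ⟨U, UsubS, Uopen, onememU⟩
  refine ⟨U ∩ U⁻¹, ?_, ?_, ?_, ?_⟩
  · simp [Uopen.mem_nhds onememU, inv_mem_nhds_one]
  · simp [inter_comm]
  · exact Uopen.inter Uopen.inv
  · exact fun a ha ↦ mulclose (mul_subset_mul_left UsubS (mul_subset_mul_left inter_subset_left ha))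

/-- Variant of `TopologicalGroup.exist_openSubgroup_sub_clopen_nhd_of_one` for a compact clopen
neighborhood of `1` in a not-necessarily-compact group. -/
lemma myExist_openSubgroup_sub {W : Set G} (Wcomp : IsCompact W) (WClopen : IsClopen W)
    (einW : (1 : G) ∈ W) : ∃ H : OpenSubgroup G, (H : Set G) ⊆ W := by
  rcases myExists_mulInvClosureNhd Wcomp WClopen with ⟨V, hV⟩
  let S : Subgroup G := {
    carrier := ⋃ n, V ^ (n + 1)
    mul_mem' := fun ha hb ↦ by
      rcases mem_iUnion.mp ha with ⟨k, hk⟩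
      rcases mem_iUnion.mp hb with ⟨l, hl⟩
      apply mem_iUnion.mpr
      use k + 1 + l
      rw [add_assoc, pow_add]
      exact Set.mul_mem_mul hk hl
    one_mem' := by
      apply mem_iUnion.mpr
      use 0
      simp [mem_of_mem_nhds hV.nhds]
    inv_mem' := fun ha ↦ by
      rcases mem_iUnion.mp ha with ⟨k, hk⟩
      apply mem_iUnion.mpr
      use k
      rw [← hV.inv]
      simpa only [inv_pow, Set.mem_inv, inv_inv] using hk }
  have : IsOpen (⋃ n, V ^ (n + 1)) := by
    refine isOpen_iUnion (fun n ↦ ?_)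
    rw [pow_succ]
    exact hV.isOpen.mul_left
  use ⟨S, this⟩
  have mulVpow (n : ℕ) : W * V ^ (n + 1) ⊆ W := by
    induction' n with n ih
    · simp [hV.mul]
    · rw [pow_succ, ← mul_assoc]
      exact (Set.mul_subset_mul_right ih).trans hV.mul
  have (n : ℕ) : V ^ (n + 1) ⊆ W * V ^ (n + 1) := by
    intro x xin
    rw [Set.mem_mul]
    exact ⟨1, einW, x, xin, one_mul x⟩
  exact iUnion_subset fun i _ a ↦ mulVpow i (this i a)

/-- Van Dantzig's theorem: a locally compact totally disconnected Hausdorff group has a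
compact open subgroup. -/
lemma exists_compact_open_subgroup [LocallyCompactSpace G] [TotallyDisconnectedSpace G]
    [T2Space G] : ∃ U : Subgroup G, IsCompact (U : Set G) ∧ IsOpen (U : Set G) := by
  obtain ⟨C, hCnhds, _, hCcomp⟩ := local_compact_nhds (x := (1 : G)) (n := univ) univ_mem
  obtain ⟨W, hWclopen, hW1, hWC⟩ :=
    (loc_compact_Haus_tot_disc_of_zero_dim (H := G)).mem_nhds_iff.mp hCnhds
  have hWcomp : IsCompact W := hCcomp.of_isClosed_subset hWclopen.1 hWC
  obtain ⟨H, hHW⟩ := myExist_openSubgroup_sub hWcomp hWclopen hW1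
  exact ⟨H.1, hWcomp.of_isClosed_subset H.isClosed hHW, H.isOpen⟩

end VanDantzig

/-- A topological group is locally elliptic if every compact subset is contained in a
compact subgroup. -/
def IsLocallyElliptic (G : Type*) [Group G] [TopologicalSpace G] : Prop :=
  ∀ K : Set G, IsCompact K → ∃ H : Subgroup G, IsCompact (H : Set G) ∧ K ⊆ (H : Set G)

section Aux

variable (p : ℕ) [Fact p.Prime]

lemma padic_norm_lt_one_iff (q : ℚ_[p]) : ‖q‖ < 1 ↔ ‖q‖ ≤ ((p : ℝ))⁻¹ := by
  have := Padic.norm_le_pow_iff_norm_lt_pow_add_one q (-1)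
  rw [show ((-1 : ℤ) + 1) = 0 by ring, zpow_zero] at this
  rw [← this, zpow_neg_one]

lemma padic_inv_lt_one : ((p : ℝ))⁻¹ < 1 := by
  have hp : (1 : ℝ) < p := by exact_mod_cast (Fact.out : p.Prime).one_lt
  rw [inv_lt_one_iff₀]
  right; exact hp

variable {G : Type*} [Group G] [TopologicalSpace G] [IsTopologicalGroup G]
  [LocallyCompactSpace G] [TotallyDisconnectedSpace G] [T2Space G]

/-- The invariant-function half: from local ellipticity produce an exactly invariant function. -/
lemma exists_invariant_function (hLE : IsLocallyElliptic G) (K : Set G) (hK : IsCompact K) :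
    ∃ f : G → ℚ_[p], Continuous f ∧ HasCompactSupport f ∧
      (⨆ x : G, ‖f x‖) = 1 ∧ ∀ g ∈ K, ∀ x : G, f (g⁻¹ * x) = f x := by
  obtain ⟨H, hHcomp, hKH⟩ := hLE K hK
  obtain ⟨U, hUcomp, hUopen⟩ := exists_compact_open_subgroup (G := G)
  set C : Set G := (H : Set G) * (U : Set G) with hC
  have hCcomp : IsCompact C := hHcomp.mul hUcomp
  have hCopen : IsOpen C := hUopen.mul_left
  have hCclopen : IsClopen C := ⟨hCcomp.isClosed, hCopen⟩
  have h1C : (1 : G) ∈ C := ⟨1, H.one_mem, 1, U.one_mem, mul_one 1⟩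
  have hmem : ∀ h ∈ H, ∀ x : G, x ∈ C → h * x ∈ C := by
    rintro h hh x ⟨a, ha, u, hu, rfl⟩
    exact ⟨h * a, H.mul_mem hh ha, u, hu, by simp [mul_assoc]⟩
  have hmem_iff : ∀ h ∈ H, ∀ x : G, (h * x ∈ C ↔ x ∈ C) := by
    intro h hh x
    constructor
    · intro hx
      have := hmem h⁻¹ (H.inv_mem hh) _ hx
      simpa using this
    · exact hmem h hh x
  refine ⟨Set.indicator C (fun _ ↦ (1 : ℚ_[p])), ?_, ?_, ?_, ?_⟩
  · have := (LocallyConstant.charFn ℚ_[p] hCclopen).continuous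
    rwa [LocallyConstant.coe_charFn] at this
  · apply HasCompactSupport.intro hCcomp
    intro x hx
    exact Set.indicator_of_notMem hx _
  · have hnorm : ∀ x : G, ‖Set.indicator C (fun _ ↦ (1 : ℚ_[p])) x‖ ≤ 1 := by
      intro x
      by_cases hx : x ∈ C
      · simp [Set.indicator_of_mem hx]
      · simp [Set.indicator_of_notMem hx]
    refine le_antisymm (ciSup_le hnorm) ?_
    have hb : BddAbove (Set.range fun x : G ↦ ‖Set.indicator C (fun _ ↦ (1 : ℚ_[p])) x‖) :=
      ⟨1, by rintro r ⟨x, rfl⟩; exact hnorm x⟩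
    have h1 : ‖Set.indicator C (fun _ ↦ (1 : ℚ_[p])) (1 : G)‖ = 1 := by
      simp [Set.indicator_of_mem h1C]
    calc (1 : ℝ) = ‖Set.indicator C (fun _ ↦ (1 : ℚ_[p])) (1 : G)‖ := h1.symm
      _ ≤ _ := le_ciSup hb (1 : G)
  · intro g hg x
    have hgH : g ∈ H := hKH hg
    have : (g⁻¹ * x ∈ C ↔ x ∈ C) := by
      have := hmem_iff g⁻¹ (H.inv_mem hgH) x
      exact this
    by_cases hx : x ∈ C
    · rw [Set.indicator_of_mem hx, Set.indicator_of_mem (this.mpr hx)]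
    · rw [Set.indicator_of_notMem hx, Set.indicator_of_notMem (fun h ↦ hx (this.mp h))]

end Aux

/-- A t.d.l.c. group `G` is locally elliptic iff it satisfies Reiter's
property with threshold `1` over `ℚ_p`; moreover in that case the almost-invariant function can
be chosen genuinely invariant under the given compact set. -/
theorem locallyElliptic_iff_reiter (p : ℕ) [Fact p.Prime]
    (G : Type*) [Group G] [TopologicalSpace G] [IsTopologicalGroup G]
    [LocallyCompactSpace G] [TotallyDisconnectedSpace G] [T2Space G] :
    (IsLocallyElliptic G ↔
      ∀ K : Set G, IsCompact K → ∃ f : G → ℚ_[p], Continuous f ∧ HasCompactSupport f ∧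
        (⨆ x : G, ‖f x‖) = 1 ∧ ∀ g ∈ K, (⨆ x : G, ‖f (g⁻¹ * x) - f x‖) < 1) ∧
    (IsLocallyElliptic G →
      ∀ K : Set G, IsCompact K → ∃ f : G → ℚ_[p], Continuous f ∧ HasCompactSupport f ∧
        (⨆ x : G, ‖f x‖) = 1 ∧ ∀ g ∈ K, ∀ x : G, f (g⁻¹ * x) = f x) := by
  haveI : Nonempty G := ⟨1⟩
  refine ⟨⟨?_, ?_⟩, fun hLE K hK ↦ exists_invariant_function p hLE K hK⟩
  · -- locally elliptic → Reiter
    intro hLE K hK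
    obtain ⟨f, fc, fsupp, fsup, finv⟩ := exists_invariant_function p hLE K hK
    refine ⟨f, fc, fsupp, fsup, fun g hg ↦ ?_⟩
    have : (⨆ x : G, ‖f (g⁻¹ * x) - f x‖) = 0 := by
      have : ∀ x : G, ‖f (g⁻¹ * x) - f x‖ = 0 := by
        intro x; rw [finv g hg x]; simp
      simp only [this]
      exact ciSup_const
    rw [this]; norm_num
  · -- Reiter → locally elliptic
    intro hR K hK
    obtain ⟨f, fc, fsupp, fsup, hfar⟩ := hR K hK
    obtain ⟨B, hB⟩ := fsupp.exists_bound_of_continuous fc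
    -- pointwise bound on differences
    have hbdd : ∀ g : G, BddAbove (Set.range fun x : G ↦ ‖f (g⁻¹ * x) - f x‖) := by
      intro g
      refine ⟨B + B, ?_⟩
      rintro r ⟨x, rfl⟩
      calc ‖f (g⁻¹ * x) - f x‖ ≤ ‖f (g⁻¹ * x)‖ + ‖f x‖ := norm_sub_le _ _
        _ ≤ B + B := add_le_add (hB _) (hB _)
    have hbddf : BddAbove (Set.range fun x : G ↦ ‖f x‖) :=
      ⟨B, by rintro r ⟨x, rfl⟩; exact hB x⟩
    -- the subgroup of elements almost fixing f
    set S : Set G := {g : G | ∀ x : G, ‖f (g⁻¹ * x) - f x‖ < 1} with hS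
    have hone : (1 : G) ∈ S := by intro x; simp
    have hmul : ∀ a ∈ S, ∀ b ∈ S, a * b ∈ S := by
      intro a ha b hb x
      have key : (a * b)⁻¹ * x = b⁻¹ * (a⁻¹ * x) := by group
      rw [key]
      have h1 : ‖f (b⁻¹ * (a⁻¹ * x)) - f (a⁻¹ * x)‖ < 1 := hb (a⁻¹ * x)
      have h2 : ‖f (a⁻¹ * x) - f x‖ < 1 := ha x
      calc ‖f (b⁻¹ * (a⁻¹ * x)) - f x‖
          = ‖(f (b⁻¹ * (a⁻¹ * x)) - f (a⁻¹ * x)) + (f (a⁻¹ * x) - f x)‖ := by ring_nf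
        _ ≤ max ‖f (b⁻¹ * (a⁻¹ * x)) - f (a⁻¹ * x)‖ ‖f (a⁻¹ * x) - f x‖ :=
            Padic.nonarchimedean _ _
        _ < 1 := max_lt h1 h2
    have hinv : ∀ a ∈ S, a⁻¹ ∈ S := by
      intro a ha x
      have h := ha (a * x)
      rw [inv_mul_cancel_left] at h
      rw [inv_inv, norm_sub_rev]
      exact h
    set H : Subgroup G :=
      { carrier := S
        one_mem' := hone
        mul_mem' := fun {a b} ha hb ↦ hmul a ha b hb
        inv_mem' := fun {a} ha ↦ hinv a ha } with hHdef
    -- S is closed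
    have hSclosed : IsClosed S := by
      have : S = ⋂ x : G, {g : G | ‖f (g⁻¹ * x) - f x‖ ≤ ((p : ℝ))⁻¹} := by
        ext g
        simp only [Set.mem_iInter, Set.mem_setOf_eq, hS]
        exact forall_congr' fun x ↦ padic_norm_lt_one_iff p _
      rw [this]
      refine isClosed_iInter fun x ↦ isClosed_le ?_ continuous_const
      exact ((fc.comp ((continuous_inv).mul continuous_const)).sub continuous_const).norm
    -- find a point of norm one
    have hx0 : ∃ x₀ : G, ‖f x₀‖ = 1 := by
      by_contra hcon
      push_neg at hcon
      have hle : ∀ x : G, ‖f x‖ ≤ ((p : ℝ))⁻¹ := by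
        intro x
        have hlt : ‖f x‖ < 1 := lt_of_le_of_ne (fsup ▸ le_ciSup hbddf x) (hcon x)
        exact (padic_norm_lt_one_iff p _).mp hlt
      have : (⨆ x : G, ‖f x‖) ≤ ((p : ℝ))⁻¹ := ciSup_le hle
      rw [fsup] at this
      exact absurd (lt_of_le_of_lt this (padic_inv_lt_one p)) (lt_irrefl 1)
    obtain ⟨x₀, hx₀⟩ := hx0
    -- S is contained in a compact set
    have hSsub : S ⊆ (fun s : G ↦ x₀ * s⁻¹) '' (tsupport f) := by
      intro g hg
      have hne : f (g⁻¹ * x₀) ≠ 0 := by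
        intro h0
        have := hg x₀
        rw [h0, zero_sub, norm_neg, hx₀] at this
        exact lt_irrefl 1 this
      refine ⟨g⁻¹ * x₀, subset_tsupport f hne, ?_⟩
      group
    have hKcomp : IsCompact ((fun s : G ↦ x₀ * s⁻¹) '' (tsupport f)) :=
      fsupp.image (continuous_const.mul continuous_inv)
    have hScomp : IsCompact S := hKcomp.of_isClosed_subset hSclosed hSsub
    refine ⟨H, hScomp, ?_⟩
    intro g hg x
    exact lt_of_le_of_lt (le_ciSup (hbdd g) x) (hfar g hg)
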